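/- A DBM system D is in normal form (closed under shortest paths) if and only if for all indices x, y, z one has D[x,z] ≤ D[x,y] + D[y,z]; moreover for a consistent normalized DBM, each bound is tight: for all x, y there exists a solution ψ with ψ(y) − ψ(x) = D[x,y] whenever D[x,y] < ∞. -/

import Mathlib

def dbmSol {V : Type*} (D : Option V → Option V → WithTop ℚ) : Set (V → ℚ) :=
  {ψ | ∀ x y : Option V, ((y.elim 0 ψ - x.elim 0 ψ : ℚ) : WithTop ℚ) ≤ D x y}

def pathWeights {V : Type*} (D : Option V → Option V → WithTop ℚ)
    (x y : Option V) : Set (WithTop ℚ) :=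
  {w | ∃ (k : ℕ) (c : Fin (k + 1) → Option V),
        c 0 = x ∧ c (Fin.last k) = y ∧
        w = ∑ i : Fin k, D (c i.castSucc) (c i.succ)}

lemma dbm_single_mem {V : Type*} (D : Option V → Option V → WithTop ℚ)
    (x y : Option V) : D x y ∈ pathWeights D x y := by
  refine ⟨1, ![x, y], rfl, rfl, ?_⟩
  simp

lemma dbm_path_lb {V : Type*} (D : Option V → Option V → WithTop ℚ)
    (hdiag : ∀ x : Option V, D x x = 0)
    (htri : ∀ x y z : Option V, D x z ≤ D x y + D y z) :
    ∀ (k : ℕ) (c : Fin (k+1) → Option V),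
      D (c 0) (c (Fin.last k)) ≤ ∑ i : Fin k, D (c i.castSucc) (c i.succ) := by
  intro k
  induction k with
  | zero => intro c; simp [hdiag, Fin.last]
  | succ k ih =>
    intro c
    rw [Fin.sum_univ_succ]
    have h1 := ih (fun i => c i.succ)
    simp only [Fin.succ_castSucc] at h1 ⊢
    calc D (c 0) (c (Fin.last (k+1)))
        ≤ D (c 0) (c 1) + D (c 1) (c (Fin.last (k+1))) := htri _ _ _
      _ ≤ _ := by
          refine add_le_add ?_ ?_
          · simp
          · simpa [Fin.succ_last] using h1

/-- a DBM with zero diagonal is in normal form (each coefficient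
is the minimal path weight) iff the triangle inequality holds; moreover, for a
consistent normalized DBM every finite bound is tight. -/
theorem dbm_normal_iff_triangle_and_tight {V : Type*} [Fintype V]
    (D : Option V → Option V → WithTop ℚ)
    (hdiag : ∀ x : Option V, D x x = 0) :
    ((∀ x y : Option V, IsLeast (pathWeights D x y) (D x y)) ↔
        ∀ x y z : Option V, D x z ≤ D x y + D y z) ∧
    ((dbmSol D).Nonempty →
      (∀ x y : Option V, IsLeast (pathWeights D x y) (D x y)) →
      ∀ (x y : Option V) (q : ℚ), D x y = (q : WithTop ℚ) →
        ∃ ψ ∈ dbmSol D, (y.elim 0 ψ - x.elim 0 ψ : ℚ) = q) := by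
  constructor
  · constructor
    · intro hL x y z
      have hmem : D x y + D y z ∈ pathWeights D x z := by
        refine ⟨2, ![x, y, z], rfl, rfl, ?_⟩
        simp [Fin.sum_univ_two]
      exact (hL x z).2 hmem
    · intro htri x y
      constructor
      · exact dbm_single_mem D x y
      · rintro w ⟨k, c, hx, hy, rfl⟩
        subst hx; subst hy
        exact dbm_path_lb D hdiag htri k c
  · rintro ⟨ψ0, hψ0⟩ hL x y q hq
    have htri : ∀ x y z : Option V, D x z ≤ D x y + D y z := by
      intro x y z
      have hmem : D x y + D y z ∈ pathWeights D x z := by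
        refine ⟨2, ![x, y, z], rfl, rfl, ?_⟩
        simp [Fin.sum_univ_two]
      exact (hL x z).2 hmem
    set g : Option V → ℚ := fun v => v.elim 0 ψ0 with hgdef
    have hg : ∀ u v : Option V, ((g v - g u : ℚ) : WithTop ℚ) ≤ D u v := hψ0
    set C : ℚ := max (-(g x)) (q - g y) with hCdef
    set F : Option V → ℚ := fun v => min (g v + C) ((D x v).untopD (g v + C)) with hFdef
    have hFx : F x = 0 := by
      have : D x x = ((0 : ℚ) : WithTop ℚ) := by simpa using hdiag x
      simp only [hFdef, this, WithTop.untopD_coe]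
      have : -(g x) ≤ C := le_max_left _ _
      have h0 : (0:ℚ) ≤ g x + C := by linarith
      simp [min_eq_right h0]
    have hFy : F y = q := by
      simp only [hFdef, hq, WithTop.untopD_coe]
      have : q - g y ≤ C := le_max_right _ _
      have h0 : q ≤ g y + C := by linarith
      simp [min_eq_right h0]
    have hFconstr : ∀ u v : Option V, ((F v - F u : ℚ) : WithTop ℚ) ≤ D u v := by
      intro u v
      rcases eq_or_ne (D u v) ⊤ with h | h
      · simp [h]
      · obtain ⟨r, hr⟩ := WithTop.ne_top_iff_exists.mp h
        rw [← hr, WithTop.coe_le_coe, sub_le_iff_le_add]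
        have hb1 : F v ≤ r + (g u + C) := by
          have := hg u v
          rw [← hr] at this
          have hgv : g v - g u ≤ r := by
            by_contra hc
            push_neg at hc
            exact absurd this (by rw [WithTop.coe_le_coe]; linarith)
          have : F v ≤ g v + C := min_le_left _ _
          linarith
        rcases min_cases (g u + C) ((D x u).untopD (g u + C)) with ⟨hmin, _⟩ | ⟨hmin, _⟩
        · rw [show F u = min (g u + C) ((D x u).untopD (g u + C)) from rfl, hmin]
          exact hb1
        · rw [show F u = min (g u + C) ((D x u).untopD (g u + C)) from rfl, hmin]
          rcases eq_or_ne (D x u) ⊤ with h3 | h3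
          · rw [h3, WithTop.untopD_top]; exact hb1
          · obtain ⟨s, hs⟩ := WithTop.ne_top_iff_exists.mp h3
            rw [← hs, WithTop.untopD_coe]
            have hxv : D x v ≤ ((s + r : ℚ) : WithTop ℚ) := by
              have := htri x u v
              rw [← hs, ← hr, ← WithTop.coe_add] at this
              exact this
            have h4 : D x v ≠ ⊤ := ne_top_of_le_ne_top (WithTop.coe_ne_top) hxv
            obtain ⟨p, hp⟩ := WithTop.ne_top_iff_exists.mp h4
            have hps : p ≤ s + r := by
              rw [← hp, WithTop.coe_le_coe] at hxv; exact hxv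
            have : F v ≤ p := by
              have : F v ≤ (D x v).untopD (g v + C) := min_le_right _ _
              rwa [← hp, WithTop.untopD_coe] at this
            linarith
    refine ⟨fun v => F (some v) - F none, ?_, ?_⟩
    · intro u v
      have hel : ∀ w : Option V, w.elim 0 (fun v => F (some v) - F none) = F w - F none := by
        rintro (_ | w) <;> simp
      rw [hel, hel]
      have : F v - F none - (F u - F none) = F v - F u := by ring
      rw [this]
      exact hFconstr u v
    · have hel : ∀ w : Option V, w.elim 0 (fun v => F (some v) - F none) = F w - F none := by
        rintro (_ | w) <;> simp
      rw [hel, hel, hFx, hFy]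
      ring
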